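/- Let r ≥ 3 be an integer. On the set Fin 2 × Fin r, define involutions ρ₀,…,ρ_{r−1} ∈ Sym(Fin 2 × Fin r) by: for 0 ≤ i ≤ r−3, ρᵢ(ε, x) := (ε, (i i+1)(x)) (i.e. ρᵢ = Equiv.prodCongr (Equiv.refl (Fin 2)) (Equiv.swap i (i+1))); ρ_{r−2} := the transposition swapping (0, r−2) and (0, r−1); and ρ_{r−1}(ε, x) := ((0 1)(ε), x) (i.e. ρ_{r−1} = Equiv.prodCongr (Equiv.swap 0 1) (Equiv.refl (Fin r))). Then the family (ρ₀,…,ρ_{r−1}) satisfies the string property and the intersection property, and the generated subgroup is exactly the full stabilizer of the partition of Fin 2 × Fin r into the two rows {ε} × Fin r: ⟨ρ₀,…,ρ_{r−1}⟩ = { σ : ∃ π ∈ Sym(Fin 2), ∀ ε x, (σ (ε, x)).1 = π ε } (a group isomorphic to the wreath product S_r ≀ C₂, of order 2·(r!)²). -/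

import Mathlib

namespace WreathAux

open Equiv Subgroup

lemma gen_lt_aux {r : ℕ} (i : Fin r) (h : (i : ℕ) + 3 ≤ r) : (i : ℕ) + 1 < r := by omega

def gen (r : ℕ) (i : Fin r) : Equiv.Perm (Fin 2 × Fin r) :=
  if h : (i : ℕ) + 3 ≤ r then
    Equiv.prodCongr (Equiv.refl (Fin 2))
      (Equiv.swap ⟨(i : ℕ), i.isLt⟩ ⟨(i : ℕ) + 1, gen_lt_aux i h⟩)
  else if h2 : (i : ℕ) = r - 2 then
    Equiv.swap (0, ⟨r - 2, by have := i.isLt; omega⟩) (0, ⟨r - 1, by have := i.isLt; omega⟩)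
  else
    Equiv.prodCongr (Equiv.swap (0 : Fin 2) 1) (Equiv.refl (Fin r))

variable {r : ℕ}

/-- `k` is (the value of) an element of `I`. -/
def Pm (I : Set (Fin r)) (k : ℕ) : Prop := ∃ h : k < r, (⟨k, h⟩ : Fin r) ∈ I

/-- the edge `k ~ k+1` is present in row `ε` -/
def edge (I : Set (Fin r)) (ε : Fin 2) (k : ℕ) : Prop :=
  (k + 2 < r ∧ Pm I k) ∨ (k + 2 = r ∧ Pm I k ∧ (ε = 0 ∨ Pm I (r - 1)))

/-- `x` and `y` are in the same block of row `ε` -/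
def conn (I : Set (Fin r)) (ε : Fin 2) (x y : ℕ) : Prop :=
  ∀ k, min x y ≤ k → k + 1 ≤ max x y → edge I ε k

def Dm (I : Set (Fin r)) (x : ℕ) : Prop := Pm I (r - 2) ∧ conn I 0 x (r - 1)

lemma conn_self (I : Set (Fin r)) (ε : Fin 2) (x : ℕ) : conn I ε x x := by
  intro k h1 h2; simp at h1 h2; omega

lemma conn_symm {I : Set (Fin r)} {ε : Fin 2} {x y : ℕ} (h : conn I ε x y) : conn I ε y x := by
  intro k h1 h2; exact h k (by omega) (by omega)

lemma conn_trans {I : Set (Fin r)} {ε : Fin 2} {x y z : ℕ}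
    (h1 : conn I ε x y) (h2 : conn I ε y z) : conn I ε x z := by
  intro k hk1 hk2
  by_cases hc : min x y ≤ k ∧ k + 1 ≤ max x y
  · exact h1 k hc.1 hc.2
  · exact h2 k (by omega) (by omega)

lemma edge_cast {I : Set (Fin r)} {ε ε' : Fin 2} {k : ℕ} (hP : Pm I (r - 1))
    (h : edge I ε k) : edge I ε' k := by
  rcases h with h | h
  · exact Or.inl h
  · exact Or.inr ⟨h.1, h.2.1, Or.inr hP⟩

lemma conn_cast {I : Set (Fin r)} {ε ε' : Fin 2} {x y : ℕ} (hP : Pm I (r - 1))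
    (h : conn I ε x y) : conn I ε' x y := fun k h1 h2 => edge_cast hP (h k h1 h2)

lemma Dm_transfer {I : Set (Fin r)} {x y : ℕ} (h : conn I 0 x y) (hD : ¬ Dm I x) : ¬ Dm I y := by
  intro ⟨h1, h2⟩; exact hD ⟨h1, conn_trans h h2⟩

lemma fin2_cases (u : Fin 2) : u = 0 ∨ u = 1 := by omega

lemma fin2_trans {x y z : Fin 2} (h1 : x ≠ y) (h2 : y ≠ z) : x = z := by omega

lemma fin2_ne0 {u : Fin 2} (h : u ≠ 0) : u = 1 := by omega

lemma fin2_ne1 {u : Fin 2} (h : u ≠ 1) : u = 0 := by omega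

lemma fin2_swap01 : ∀ u v : Fin 2, u ≠ v → Equiv.swap (0 : Fin 2) 1 u = v := by decide

def WS (I : Set (Fin r)) : Set (Equiv.Perm (Fin 2 × Fin r)) :=
  {σ |
    ((∀ p : Fin 2 × Fin r, (σ p).1 = p.1) ∨
      ((∀ p : Fin 2 × Fin r, (σ p).1 ≠ p.1) ∧ Pm I (r - 1)))
    ∧ (∀ p : Fin 2 × Fin r, conn I p.1 (p.2 : ℕ) ((σ p).2 : ℕ))
    ∧ (∀ x : Fin r, ¬ Dm I (x : ℕ) → (σ (0, x)).2 = (σ (1, x)).2)}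

lemma WS_one (I : Set (Fin r)) : (1 : Equiv.Perm (Fin 2 × Fin r)) ∈ WS I :=
  ⟨Or.inl fun _ => rfl, fun p => conn_self I p.1 _, fun _ _ => rfl⟩

lemma WS_mul {I : Set (Fin r)} {a b : Equiv.Perm (Fin 2 × Fin r)}
    (haa : a ∈ WS I) (hbb : b ∈ WS I) : a * b ∈ WS I := by
  obtain ⟨ha1, ha2, ha3⟩ := haa
  obtain ⟨hb1, hb2, hb3⟩ := hbb
  refine ⟨?_, ?_, ?_⟩
  · rcases ha1 with ha | ha <;> rcases hb1 with hb | hb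
    · exact Or.inl fun p => by simp only [Perm.mul_apply, ha, hb]
    · refine Or.inr ⟨fun p => ?_, hb.2⟩
      simp only [Perm.mul_apply]
      rw [ha (b p)]; exact hb.1 p
    · refine Or.inr ⟨fun p => ?_, ha.2⟩
      simp only [Perm.mul_apply]
      rw [← hb p]; exact ha.1 (b p)
    · exact Or.inl fun p => fin2_trans (ha.1 (b p)) (hb.1 p)
  · intro p
    have h1 := hb2 p
    have h2 := ha2 (b p)
    simp only [Perm.mul_apply]
    rcases hb1 with hb | hb
    · rw [hb p] at h2; exact conn_trans h1 h2
    · exact conn_trans h1 (conn_cast hb.2 h2)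
  · intro x hx
    have hy := hb3 x hx
    have hconn : conn I 0 (x : ℕ) ((b (0, x)).2 : ℕ) := hb2 (0, x)
    have hDy : ¬ Dm I ((b (0, x)).2 : ℕ) := Dm_transfer hconn hx
    simp only [Perm.mul_apply]
    rcases hb1 with hb | hb
    · have e0 : b (0, x) = (0, (b (0, x)).2) := Prod.ext (hb (0, x)) rfl
      have e1 : b (1, x) = (1, (b (0, x)).2) := Prod.ext (hb (1, x)) hy.symm
      rw [e0, e1]
      exact ha3 _ hDy
    · have e0 : b (0, x) = (1, (b (0, x)).2) := Prod.ext (fin2_ne0 (hb.1 (0, x))) rfl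
      have e1 : b (1, x) = (0, (b (0, x)).2) := Prod.ext (fin2_ne1 (hb.1 (1, x))) hy.symm
      rw [e0, e1]
      exact (ha3 _ hDy).symm

/-- The explicit description of the parabolic subgroups. -/
def W (I : Set (Fin r)) : Subgroup (Equiv.Perm (Fin 2 × Fin r)) where
  carrier := WS I
  one_mem' := WS_one I
  mul_mem' := WS_mul
  inv_mem' := by
    intro a ha
    have hpow : ∀ n : ℕ, a ^ n ∈ WS I := by
      intro n; induction n with
      | zero => exact WS_one I
      | succ n ih => rw [pow_succ]; exact WS_mul ih ha
    have h2 : a * a ^ (orderOf a - 1) = 1 := by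
      rw [← pow_succ', Nat.sub_add_cancel (orderOf_pos a), pow_orderOf_eq_one]
    have h1 : a⁻¹ = a ^ (orderOf a - 1) := inv_eq_of_mul_eq_one_right h2
    show a⁻¹ ∈ WS I
    rw [h1]
    exact hpow _

section Gen

lemma rowswap_apply (ε₀ : Fin 2) (a b : Fin r) (p : Fin 2 × Fin r) :
    Equiv.swap (ε₀, a) (ε₀, b) p = (p.1, if p.1 = ε₀ then Equiv.swap a b p.2 else p.2) := by
  obtain ⟨ε, x⟩ := p
  by_cases hε : ε = ε₀
  · subst hε
    rw [if_pos rfl]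
    by_cases hxa : x = a
    · subst hxa; rw [Equiv.swap_apply_left, Equiv.swap_apply_left]
    · by_cases hxb : x = b
      · subst hxb; rw [Equiv.swap_apply_right, Equiv.swap_apply_right]
      · rw [Equiv.swap_apply_of_ne_of_ne (fun h => hxa (congrArg Prod.snd h))
          (fun h => hxb (congrArg Prod.snd h)), Equiv.swap_apply_of_ne_of_ne hxa hxb]
  · rw [if_neg hε, Equiv.swap_apply_of_ne_of_ne (fun h => hε (congrArg Prod.fst h))
      (fun h => hε (congrArg Prod.fst h))]

lemma gen_low_def {i : Fin r} (h : (i : ℕ) + 3 ≤ r) :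
    gen r i = Equiv.prodCongr (Equiv.refl (Fin 2))
      (Equiv.swap ⟨(i : ℕ), i.isLt⟩ ⟨(i : ℕ) + 1, gen_lt_aux i h⟩) := dif_pos h

lemma gen_mid_def (hr : 3 ≤ r) {i : Fin r} (h2 : (i : ℕ) = r - 2) :
    gen r i = Equiv.swap (0, ⟨r - 2, by omega⟩) (0, ⟨r - 1, by omega⟩) := by
  rw [gen, dif_neg (by omega), dif_pos h2]

lemma gen_hi_def (hr : 3 ≤ r) {i : Fin r} (h2 : (i : ℕ) = r - 1) :
    gen r i = Equiv.prodCongr (Equiv.swap (0 : Fin 2) 1) (Equiv.refl (Fin r)) := by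
  have := i.isLt
  rw [gen, dif_neg (by omega), dif_neg (by omega)]

lemma gen_low_apply {i : Fin r} (h : (i : ℕ) + 3 ≤ r) (p : Fin 2 × Fin r) :
    gen r i p = (p.1, Equiv.swap ⟨(i : ℕ), i.isLt⟩ ⟨(i : ℕ) + 1, gen_lt_aux i h⟩ p.2) := by
  rw [gen_low_def h]; rfl

lemma gen_hi_apply (hr : 3 ≤ r) {i : Fin r} (h2 : (i : ℕ) = r - 1) (p : Fin 2 × Fin r) :
    gen r i p = (Equiv.swap (0 : Fin 2) 1 p.1, p.2) := by
  rw [gen_hi_def hr h2]; rfl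

lemma conn_adj {I : Set (Fin r)} {ε : Fin 2} {k : ℕ} (h : edge I ε k) : conn I ε k (k + 1) := by
  intro k' h1 h2
  have : k' = k := by omega
  rwa [this]

lemma Pm_of_edge {I : Set (Fin r)} {ε : Fin 2} {k : ℕ} (h : edge I ε k) : Pm I k :=
  h.elim And.right (fun h => h.2.1)

lemma edge_r2_lt {I : Set (Fin r)} {ε : Fin 2} {k : ℕ} (h : edge I ε k) : k + 2 ≤ r := by
  rcases h with h | h <;> omega

/-- swap on row `ε₀` (of two connected points) is in `W I`. -/
lemma rowswap_mem_W {I : Set (Fin r)} (ε₀ : Fin 2) (a b : Fin r)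
    (hconn : conn I ε₀ (a : ℕ) (b : ℕ))
    (hD : ∀ x : Fin r, ¬ Dm I (x : ℕ) → x ≠ a ∧ x ≠ b) :
    Equiv.swap (ε₀, a) (ε₀, b) ∈ W I := by
  refine ⟨Or.inl fun p => by rw [rowswap_apply], fun p => ?_, fun x hx => ?_⟩
  · rw [rowswap_apply]
    dsimp only
    by_cases h1 : p.1 = ε₀
    · rw [if_pos h1, h1]
      by_cases h2 : p.2 = a
      · rw [h2, Equiv.swap_apply_left]; exact hconn
      · by_cases h3 : p.2 = b
        · rw [h3, Equiv.swap_apply_right]; exact conn_symm hconn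
        · rw [Equiv.swap_apply_of_ne_of_ne h2 h3]; exact conn_self _ _ _
    · rw [if_neg h1]; exact conn_self _ _ _
  · obtain ⟨hxa, hxb⟩ := hD x hx
    rw [rowswap_apply, rowswap_apply]
    dsimp only
    rw [Equiv.swap_apply_of_ne_of_ne hxa hxb]
    split_ifs <;> rfl

lemma swap01_ne (u : Fin 2) : Equiv.swap (0 : Fin 2) 1 u ≠ u := by revert u; decide

lemma gen_mem_W (hr : 3 ≤ r) {I : Set (Fin r)} {i : Fin r} (hi : i ∈ I) : gen r i ∈ W I := by
  have hPm : Pm I (i : ℕ) := ⟨i.isLt, by simpa using hi⟩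
  by_cases h : (i : ℕ) + 3 ≤ r
  · rw [gen_low_def h]
    refine ⟨Or.inl fun p => rfl, fun p => ?_, fun x hx => rfl⟩
    show conn I p.1 (p.2 : ℕ) ((Equiv.swap ⟨(i : ℕ), by omega⟩ ⟨(i : ℕ) + 1, by omega⟩ p.2 : Fin r) : ℕ)
    have hedge : edge I p.1 (i : ℕ) := Or.inl ⟨by omega, hPm⟩
    by_cases h2 : p.2 = (⟨(i : ℕ), by omega⟩ : Fin r)
    · rw [h2, Equiv.swap_apply_left]; exact conn_adj hedge
    · by_cases h3 : p.2 = (⟨(i : ℕ) + 1, by omega⟩ : Fin r)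
      · rw [h3, Equiv.swap_apply_right]; exact conn_symm (conn_adj hedge)
      · rw [Equiv.swap_apply_of_ne_of_ne h2 h3]; exact conn_self _ _ _
  · by_cases h2 : (i : ℕ) = r - 2
    · rw [gen_mid_def hr h2]
      have hedge : edge I 0 (r - 2) := Or.inr ⟨by omega, h2 ▸ hPm, Or.inl rfl⟩
      apply rowswap_mem_W
      · show conn I 0 ((r : ℕ) - 2) (r - 1)
        have := conn_adj hedge
        have e : r - 2 + 1 = r - 1 := by omega
        rwa [e] at this
      · intro x hx
        constructor
        · intro hxa
          apply hx
          refine ⟨h2 ▸ hPm, ?_⟩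
          rw [hxa]
          show conn I 0 (r - 2) (r - 1)
          have := conn_adj hedge
          have e : r - 2 + 1 = r - 1 := by omega
          rwa [e] at this
        · intro hxb
          apply hx
          refine ⟨h2 ▸ hPm, ?_⟩
          rw [hxb]
          exact conn_self _ _ _
    · have h3 : (i : ℕ) = r - 1 := by have := i.isLt; omega
      rw [gen_hi_def hr h3]
      exact ⟨Or.inr ⟨fun p => swap01_ne p.1, h3 ▸ hPm⟩, fun p => conn_self _ _ _, fun x hx => rfl⟩

/-- the parabolic subgroup generated by `I` -/
def G (I : Set (Fin r)) : Subgroup (Equiv.Perm (Fin 2 × Fin r)) :=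
  Subgroup.closure ((gen r) '' I)

lemma G_le_W (hr : 3 ≤ r) (I : Set (Fin r)) : G I ≤ W I := by
  apply Subgroup.closure_le (W I) |>.mpr
  rintro _ ⟨i, hi, rfl⟩
  exact gen_mem_W hr hi

lemma Pm_inter {I J : Set (Fin r)} {k : ℕ} : Pm (I ∩ J) k ↔ Pm I k ∧ Pm J k := by
  constructor
  · rintro ⟨h, h1, h2⟩; exact ⟨⟨h, h1⟩, ⟨h, h2⟩⟩
  · rintro ⟨⟨h, h1⟩, ⟨h', h2⟩⟩; exact ⟨h, h1, h2⟩

lemma edge_inter {I J : Set (Fin r)} {ε : Fin 2} {k : ℕ} (hI : edge I ε k) (hJ : edge J ε k) :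
    edge (I ∩ J) ε k := by
  rcases hI with hI | hI <;> rcases hJ with hJ | hJ
  · exact Or.inl ⟨hI.1, Pm_inter.mpr ⟨hI.2, hJ.2⟩⟩
  · omega
  · omega
  · refine Or.inr ⟨hI.1, Pm_inter.mpr ⟨hI.2.1, hJ.2.1⟩, ?_⟩
    rcases hI.2.2 with h0 | hP1
    · exact Or.inl h0
    · rcases hJ.2.2 with h0 | hP2
      · exact Or.inl h0
      · exact Or.inr (Pm_inter.mpr ⟨hP1, hP2⟩)

lemma conn_inter {I J : Set (Fin r)} {ε : Fin 2} {x y : ℕ}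
    (hI : conn I ε x y) (hJ : conn J ε x y) : conn (I ∩ J) ε x y :=
  fun k h1 h2 => edge_inter (hI k h1 h2) (hJ k h1 h2)

lemma W_inter {I J : Set (Fin r)} {σ : Equiv.Perm (Fin 2 × Fin r)}
    (hI : σ ∈ W I) (hJ : σ ∈ W J) : σ ∈ W (I ∩ J) := by
  obtain ⟨hI1, hI2, hI3⟩ := hI
  obtain ⟨hJ1, hJ2, hJ3⟩ := hJ
  refine ⟨?_, fun p => conn_inter (hI2 p) (hJ2 p), fun x hx => ?_⟩
  · rcases hI1 with h | h
    · exact Or.inl h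
    · rcases hJ1 with h' | h'
      · exact Or.inl h'
      · exact Or.inr ⟨h.1, Pm_inter.mpr ⟨h.2, h'.2⟩⟩
  · by_cases hDI : Dm I (x : ℕ)
    · by_cases hDJ : Dm J (x : ℕ)
      · exact absurd ⟨Pm_inter.mpr ⟨hDI.1, hDJ.1⟩, conn_inter hDI.2 hDJ.2⟩ hx
      · exact hJ3 x hDJ
    · exact hI3 x hDI

end Gen

section Inversions

def invset (f : Fin r → Fin r) : Finset (Fin r × Fin r) :=
  Finset.univ.filter (fun p => p.1 < p.2 ∧ f p.2 < f p.1)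

def invc (f : Fin r → Fin r) : ℕ := (invset f).card

lemma mem_invset {f : Fin r → Fin r} {p : Fin r × Fin r} :
    p ∈ invset f ↔ p.1 < p.2 ∧ f p.2 < f p.1 := by simp [invset]

lemma val_swap {i : ℕ} (hi : i + 1 < r) (z : Fin r) :
    ((Equiv.swap (⟨i, by omega⟩ : Fin r) ⟨i + 1, hi⟩ z : Fin r) : ℕ) =
      if (z : ℕ) = i then i + 1 else if (z : ℕ) = i + 1 then i else (z : ℕ) := by
  by_cases h1 : (z : ℕ) = i
  · have hz : z = (⟨i, by omega⟩ : Fin r) := Fin.ext h1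
    rw [hz, Equiv.swap_apply_left, if_pos rfl]
  · by_cases h2 : (z : ℕ) = i + 1
    · have hz : z = (⟨i + 1, hi⟩ : Fin r) := Fin.ext h2
      rw [hz, Equiv.swap_apply_right, if_neg (by simpa using h1), if_pos rfl]
    · rw [Equiv.swap_apply_of_ne_of_ne (fun h => h1 (by rw [h]))
        (fun h => h2 (by rw [h])), if_neg h1, if_neg h2]

lemma psi_mem {f : Fin r → Fin r} {i : ℕ} (hi : i + 1 < r) {p : Fin r × Fin r}
    (hp : p ∈ invset (f ∘ (Equiv.swap (⟨i, by omega⟩ : Fin r) ⟨i + 1, hi⟩)))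
    (hne : p ≠ ((⟨i, by omega⟩ : Fin r), (⟨i + 1, hi⟩ : Fin r))) :
    (Equiv.swap (⟨i, by omega⟩ : Fin r) ⟨i + 1, hi⟩ p.1,
      Equiv.swap (⟨i, by omega⟩ : Fin r) ⟨i + 1, hi⟩ p.2) ∈ invset f ∧
    (Equiv.swap (⟨i, by omega⟩ : Fin r) ⟨i + 1, hi⟩ p.1,
      Equiv.swap (⟨i, by omega⟩ : Fin r) ⟨i + 1, hi⟩ p.2) ≠ ((⟨i, by omega⟩ : Fin r), ⟨i + 1, hi⟩) := by
  obtain ⟨h12, hval⟩ := mem_invset.mp hp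
  have h12v : (p.1 : ℕ) < (p.2 : ℕ) := h12
  have hnev : ¬((p.1 : ℕ) = i ∧ (p.2 : ℕ) = i + 1) := by
    rintro ⟨e1, e2⟩
    exact hne (Prod.ext (Fin.ext e1) (Fin.ext e2))
  constructor
  · rw [mem_invset]
    refine ⟨?_, hval⟩
    rw [Fin.lt_def, val_swap hi, val_swap hi]
    have := p.2.isLt
    split_ifs <;> omega
  · intro h
    have h1 : ((Equiv.swap (⟨i, by omega⟩ : Fin r) ⟨i + 1, hi⟩ p.1 : Fin r) : ℕ) = i :=
      congrArg (fun q : Fin r × Fin r => ((q.1 : Fin r) : ℕ)) h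
    have h2 : ((Equiv.swap (⟨i, by omega⟩ : Fin r) ⟨i + 1, hi⟩ p.2 : Fin r) : ℕ) = i + 1 :=
      congrArg (fun q : Fin r × Fin r => ((q.2 : Fin r) : ℕ)) h
    rw [val_swap hi] at h1 h2
    split_ifs at h1 h2 <;> omega

lemma invc_comp_swap_lt {f : Fin r → Fin r} {i : ℕ} (hi : i + 1 < r)
    (hd : f ⟨i + 1, hi⟩ < f ⟨i, by omega⟩) :
    invc (f ∘ (Equiv.swap (⟨i, by omega⟩ : Fin r) ⟨i + 1, hi⟩)) < invc f := by
  have hq : ((⟨i, by omega⟩ : Fin r), (⟨i + 1, hi⟩ : Fin r)) ∈ invset f :=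
    mem_invset.mpr ⟨by rw [Fin.lt_def]; exact Nat.lt_succ_self i, hd⟩
  have hS : ((⟨i, by omega⟩ : Fin r), (⟨i + 1, hi⟩ : Fin r)) ∉
      invset (f ∘ (Equiv.swap (⟨i, by omega⟩ : Fin r) ⟨i + 1, hi⟩)) := by
    rw [mem_invset]
    rintro ⟨-, h⟩
    simp only [Function.comp_apply, Equiv.swap_apply_left, Equiv.swap_apply_right] at h
    exact absurd hd (lt_asymm h)
  have hcard : invc (f ∘ (Equiv.swap (⟨i, by omega⟩ : Fin r) ⟨i + 1, hi⟩)) ≤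
      ((invset f).erase ((⟨i, by omega⟩ : Fin r), (⟨i + 1, hi⟩ : Fin r))).card := by
    apply Finset.card_le_card_of_injOn
      (fun p => (Equiv.swap (⟨i, by omega⟩ : Fin r) ⟨i + 1, hi⟩ p.1,
        Equiv.swap (⟨i, by omega⟩ : Fin r) ⟨i + 1, hi⟩ p.2))
    · intro p hp
      have hne : p ≠ ((⟨i, by omega⟩ : Fin r), (⟨i + 1, hi⟩ : Fin r)) := fun h => hS (h ▸ hp)
      obtain ⟨hm, hn⟩ := psi_mem hi hp hne
      exact Finset.mem_erase.mpr ⟨hn, hm⟩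
    · intro p _ q _ hpq
      have h1 := congrArg Prod.fst hpq
      have h2 := congrArg Prod.snd hpq
      exact Prod.ext ((Equiv.swap _ _).injective h1) ((Equiv.swap _ _).injective h2)
  have h1 : ((invset f).erase ((⟨i, by omega⟩ : Fin r), (⟨i + 1, hi⟩ : Fin r))).card
      = (invset f).card - 1 := Finset.card_erase_of_mem hq
  have h2 : 0 < (invset f).card := Finset.card_pos.mpr ⟨_, hq⟩
  unfold invc at *
  omega

lemma invc_comp_swap_le (f : Fin r → Fin r) {i : ℕ} (hi : i + 1 < r) :
    invc (f ∘ (Equiv.swap (⟨i, by omega⟩ : Fin r) ⟨i + 1, hi⟩)) ≤ invc f + 1 := by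
  have hcard : invc (f ∘ (Equiv.swap (⟨i, by omega⟩ : Fin r) ⟨i + 1, hi⟩)) ≤
      (insert ((⟨i, by omega⟩ : Fin r), (⟨i + 1, hi⟩ : Fin r)) (invset f)).card := by
    apply Finset.card_le_card_of_injOn
      (fun p => if p = ((⟨i, by omega⟩ : Fin r), (⟨i + 1, hi⟩ : Fin r))
        then ((⟨i, by omega⟩ : Fin r), (⟨i + 1, hi⟩ : Fin r))
        else (Equiv.swap (⟨i, by omega⟩ : Fin r) ⟨i + 1, hi⟩ p.1,
          Equiv.swap (⟨i, by omega⟩ : Fin r) ⟨i + 1, hi⟩ p.2))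
    · intro p hp
      by_cases hne : p = ((⟨i, by omega⟩ : Fin r), (⟨i + 1, hi⟩ : Fin r))
      · dsimp only; rw [if_pos hne]; exact Finset.mem_insert_self _ _
      · dsimp only; rw [if_neg hne]
        exact Finset.mem_insert_of_mem (psi_mem hi hp hne).1
    · intro p hp q hq hpq
      simp only at hpq
      by_cases hp1 : p = ((⟨i, by omega⟩ : Fin r), (⟨i + 1, hi⟩ : Fin r)) <;>
        by_cases hq1 : q = ((⟨i, by omega⟩ : Fin r), (⟨i + 1, hi⟩ : Fin r))
      · rw [hp1, hq1]
      · rw [if_pos hp1, if_neg hq1] at hpq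
        exact absurd hpq.symm (psi_mem hi hq hq1).2
      · rw [if_neg hp1, if_pos hq1] at hpq
        exact absurd hpq (psi_mem hi hp hp1).2
      · rw [if_neg hp1, if_neg hq1] at hpq
        have h1 := congrArg Prod.fst hpq
        have h2 := congrArg Prod.snd hpq
        exact Prod.ext ((Equiv.swap _ _).injective h1) ((Equiv.swap _ _).injective h2)
  calc invc (f ∘ (Equiv.swap (⟨i, by omega⟩ : Fin r) ⟨i + 1, hi⟩))
      ≤ (insert ((⟨i, by omega⟩ : Fin r), (⟨i + 1, hi⟩ : Fin r)) (invset f)).card := hcard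
    _ ≤ invc f + 1 := Finset.card_insert_le _ _

lemma exists_descent_or_id {f : Fin r → Fin r} (hf : Function.Injective f) :
    (∃ i : ℕ, ∃ hi : i + 1 < r, f ⟨i + 1, hi⟩ < f ⟨i, by omega⟩) ∨ ∀ x, f x = x := by
  by_cases hd : ∃ i : ℕ, ∃ hi : i + 1 < r, f ⟨i + 1, hi⟩ < f ⟨i, by omega⟩
  · exact Or.inl hd
  · right
    push_neg at hd
    have step : ∀ i (hi : i + 1 < r), f ⟨i, by omega⟩ < f ⟨i + 1, hi⟩ := by
      intro i hi
      have h1 : ((f ⟨i + 1, hi⟩ : Fin r) : ℕ) ≥ ((f ⟨i, by omega⟩ : Fin r) : ℕ) := by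
        exact hd i hi
      have h2 : ((f ⟨i, by omega⟩ : Fin r) : ℕ) ≠ ((f ⟨i + 1, hi⟩ : Fin r) : ℕ) := by
        intro h
        have := hf (Fin.ext h : f ⟨i, by omega⟩ = f ⟨i + 1, hi⟩)
        rw [Fin.ext_iff] at this
        simp at this
      rw [Fin.lt_def]
      omega
    have key : ∀ d (x : ℕ) (hx : x + d + 1 < r), f ⟨x, by omega⟩ < f ⟨x + d + 1, hx⟩ := by
      intro d
      induction d with
      | zero => intro x hx; exact step x hx
      | succ d ih =>
        intro x hx
        calc f ⟨x, by omega⟩ < f ⟨x + d + 1, by omega⟩ := ih x (by omega)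
          _ < f ⟨x + d + 1 + 1, by omega⟩ := step (x + d + 1) (by omega)
    have mono : StrictMono f := by
      intro x y hxy
      have hy := y.isLt
      have hxy' : (x : ℕ) < (y : ℕ) := hxy
      have := key ((y : ℕ) - (x : ℕ) - 1) (x : ℕ) (by omega)
      have ex : (⟨(x : ℕ), by omega⟩ : Fin r) = x := Fin.ext rfl
      have ey : (⟨(x : ℕ) + ((y : ℕ) - (x : ℕ) - 1) + 1, by omega⟩ : Fin r) = y :=
        Fin.ext (by simp; omega)
      rwa [ex, ey] at this
    have wlt : WellFoundedLT (Fin r) := Finite.to_wellFoundedLT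
    have wgt : WellFoundedGT (Fin r) := Finite.to_wellFoundedGT
    exact fun x => le_antisymm mono.apply_le mono.le_apply

end Inversions

section Generation

lemma mem_W_iff {I : Set (Fin r)} {σ : Equiv.Perm (Fin 2 × Fin r)} :
    σ ∈ W I ↔ σ ∈ WS I := Iff.rfl

lemma rowswap_apply_ne (ε₀ ε : Fin 2) (hne : ε ≠ ε₀) (a b x : Fin r) :
    Equiv.swap (ε₀, a) (ε₀, b) (ε, x) = (ε, x) := by
  rw [rowswap_apply]
  exact Prod.ext rfl (by dsimp only; rw [if_neg hne])

lemma rowswap_apply_eq (ε₀ : Fin 2) (a b x : Fin r) :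
    Equiv.swap (ε₀, a) (ε₀, b) (ε₀, x) = (ε₀, Equiv.swap a b x) := by
  rw [rowswap_apply]
  exact Prod.ext rfl (by dsimp only; rw [if_pos rfl])

lemma tau_mem (hr : 3 ≤ r) {I : Set (Fin r)} :
    ∀ (n j : ℕ) (hn : j + n = r - 2), conn I 0 j (r - 1) →
      Equiv.swap ((0 : Fin 2), (⟨j, by omega⟩ : Fin r)) (0, ⟨r - 1, by omega⟩) ∈ G I := by
  intro n
  induction n with
  | zero =>
    intro j hn hconn
    have hedge : edge I 0 j := hconn j (by omega) (by omega)
    obtain ⟨hjr, hjI⟩ := Pm_of_edge hedge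
    have hgen : gen r ⟨j, hjr⟩ =
        Equiv.swap ((0 : Fin 2), (⟨j, by omega⟩ : Fin r)) (0, ⟨r - 1, by omega⟩) := by
      rw [gen_mid_def hr (show ((⟨j, hjr⟩ : Fin r) : ℕ) = r - 2 from by show j = r - 2; omega)]
      exact congrArg₂ Equiv.swap (Prod.ext rfl (Fin.ext (show r - 2 = j by omega)))
        (Prod.ext rfl rfl)
    exact Subgroup.subset_closure ⟨⟨j, hjr⟩, hjI, hgen⟩
  | succ n ih =>
    intro j hn hconn
    have hedge : edge I 0 j := hconn j (by omega) (by omega)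
    obtain ⟨hjr, hjI⟩ := Pm_of_edge hedge
    have hival : ((⟨j, hjr⟩ : Fin r) : ℕ) + 3 ≤ r := by show j + 3 ≤ r; omega
    have hgG : gen r ⟨j, hjr⟩ ∈ G I := Subgroup.subset_closure ⟨_, hjI, rfl⟩
    have hτ : Equiv.swap ((0 : Fin 2), (⟨j + 1, by omega⟩ : Fin r)) (0, ⟨r - 1, by omega⟩) ∈ G I :=
      ih (j + 1) (by omega) (fun k h1 h2 => hconn k (by omega) (by omega))
    have e1 : gen r ⟨j, hjr⟩ ((0 : Fin 2), (⟨j + 1, by omega⟩ : Fin r)) = (0, ⟨j, by omega⟩) := by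
      rw [gen_low_apply hival]
      exact Prod.ext rfl (Equiv.swap_apply_right _ _)
    have e2 : gen r ⟨j, hjr⟩ ((0 : Fin 2), (⟨r - 1, by omega⟩ : Fin r)) = (0, ⟨r - 1, by omega⟩) := by
      rw [gen_low_apply hival]
      exact Prod.ext rfl (Equiv.swap_apply_of_ne_of_ne (Fin.ne_of_val_ne (by show r - 1 ≠ j; omega))
        (Fin.ne_of_val_ne (by show r - 1 ≠ j + 1; omega)))
    have heq : Equiv.swap ((0 : Fin 2), (⟨j, by omega⟩ : Fin r)) (0, ⟨r - 1, by omega⟩) =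
        gen r ⟨j, hjr⟩ * Equiv.swap ((0 : Fin 2), (⟨j + 1, by omega⟩ : Fin r)) (0, ⟨r - 1, by omega⟩)
          * (gen r ⟨j, hjr⟩)⁻¹ := by
      rw [← Equiv.swap_apply_apply, e1, e2]
    rw [heq]
    exact mul_mem (mul_mem hgG hτ) (inv_mem hgG)

lemma s0_mem (hr : 3 ≤ r) {I : Set (Fin r)} (j : ℕ) (hj2 : j + 2 ≤ r)
    (hconn : conn I 0 j (r - 1)) :
    Equiv.swap ((0 : Fin 2), (⟨j, by omega⟩ : Fin r)) (0, ⟨j + 1, by omega⟩) ∈ G I := by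
  by_cases hc : j + 2 = r
  · have hedge : edge I 0 j := hconn j (by omega) (by omega)
    obtain ⟨hjr, hjI⟩ := Pm_of_edge hedge
    have hgen : gen r ⟨j, hjr⟩ =
        Equiv.swap ((0 : Fin 2), (⟨j, by omega⟩ : Fin r)) (0, ⟨j + 1, by omega⟩) := by
      rw [gen_mid_def hr (show ((⟨j, hjr⟩ : Fin r) : ℕ) = r - 2 from by show j = r - 2; omega)]
      exact congrArg₂ Equiv.swap (Prod.ext rfl (Fin.ext (show r - 2 = j by omega)))
        (Prod.ext rfl (Fin.ext (show r - 1 = j + 1 by omega)))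
    exact Subgroup.subset_closure ⟨⟨j, hjr⟩, hjI, hgen⟩
  · have hτj : Equiv.swap ((0 : Fin 2), (⟨j, by omega⟩ : Fin r)) (0, ⟨r - 1, by omega⟩) ∈ G I :=
      tau_mem hr (r - 2 - j) j (by omega) hconn
    have hτj1 : Equiv.swap ((0 : Fin 2), (⟨j + 1, by omega⟩ : Fin r)) (0, ⟨r - 1, by omega⟩) ∈ G I :=
      tau_mem hr (r - 2 - (j + 1)) (j + 1) (by omega)
        (fun k h1 h2 => hconn k (by omega) (by omega))
    have e1 : Equiv.swap ((0 : Fin 2), (⟨j + 1, by omega⟩ : Fin r)) (0, ⟨r - 1, by omega⟩)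
        ((0 : Fin 2), (⟨j, by omega⟩ : Fin r)) = (0, ⟨j, by omega⟩) :=
      Equiv.swap_apply_of_ne_of_ne
        (fun h => absurd (congrArg (fun p : Fin 2 × Fin r => ((p.2 : Fin r) : ℕ)) h)
          (by show ¬ (j = j + 1); omega))
        (fun h => absurd (congrArg (fun p : Fin 2 × Fin r => ((p.2 : Fin r) : ℕ)) h)
          (by show ¬ (j = r - 1); omega))
    have e2 : Equiv.swap ((0 : Fin 2), (⟨j + 1, by omega⟩ : Fin r)) (0, ⟨r - 1, by omega⟩)
        ((0 : Fin 2), (⟨r - 1, by omega⟩ : Fin r)) = (0, ⟨j + 1, by omega⟩) :=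
      Equiv.swap_apply_right _ _
    have heq : Equiv.swap ((0 : Fin 2), (⟨j, by omega⟩ : Fin r)) (0, ⟨j + 1, by omega⟩) =
        Equiv.swap ((0 : Fin 2), (⟨j + 1, by omega⟩ : Fin r)) (0, ⟨r - 1, by omega⟩)
          * Equiv.swap ((0 : Fin 2), (⟨j, by omega⟩ : Fin r)) (0, ⟨r - 1, by omega⟩)
          * (Equiv.swap ((0 : Fin 2), (⟨j + 1, by omega⟩ : Fin r)) (0, ⟨r - 1, by omega⟩))⁻¹ := by
      rw [← Equiv.swap_apply_apply, e1, e2]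
    rw [heq]
    exact mul_mem (mul_mem hτj1 hτj) (inv_mem hτj1)

lemma s1_mem (hr : 3 ≤ r) {I : Set (Fin r)} (j : ℕ) (hj : j + 2 = r)
    (hPm2 : Pm I (r - 2)) (hPm1 : Pm I (r - 1)) :
    Equiv.swap ((1 : Fin 2), (⟨j, by omega⟩ : Fin r)) (1, ⟨j + 1, by omega⟩) ∈ G I := by
  obtain ⟨h2r, h2I⟩ := hPm2
  obtain ⟨h1r, h1I⟩ := hPm1
  have hgG : gen r ⟨r - 1, h1r⟩ ∈ G I := Subgroup.subset_closure ⟨_, h1I, rfl⟩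
  have hmid : gen r ⟨r - 2, h2r⟩ =
      Equiv.swap ((0 : Fin 2), (⟨r - 2, by omega⟩ : Fin r)) (0, ⟨r - 1, by omega⟩) :=
    gen_mid_def hr rfl
  have hmG : Equiv.swap ((0 : Fin 2), (⟨r - 2, by omega⟩ : Fin r)) (0, ⟨r - 1, by omega⟩) ∈ G I :=
    Subgroup.subset_closure ⟨_, h2I, hmid⟩
  have e1 : gen r ⟨r - 1, h1r⟩ ((0 : Fin 2), (⟨r - 2, by omega⟩ : Fin r)) = (1, ⟨j, by omega⟩) := by
    rw [gen_hi_apply hr rfl]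
    exact Prod.ext (Equiv.swap_apply_left _ _) (Fin.ext (show r - 2 = j by omega))
  have e2 : gen r ⟨r - 1, h1r⟩ ((0 : Fin 2), (⟨r - 1, by omega⟩ : Fin r)) = (1, ⟨j + 1, by omega⟩) := by
    rw [gen_hi_apply hr rfl]
    exact Prod.ext (Equiv.swap_apply_left _ _) (Fin.ext (show r - 1 = j + 1 by omega))
  have heq : Equiv.swap ((1 : Fin 2), (⟨j, by omega⟩ : Fin r)) (1, ⟨j + 1, by omega⟩) =
      gen r ⟨r - 1, h1r⟩
        * Equiv.swap ((0 : Fin 2), (⟨r - 2, by omega⟩ : Fin r)) (0, ⟨r - 1, by omega⟩)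
        * (gen r ⟨r - 1, h1r⟩)⁻¹ := by
    rw [← Equiv.swap_apply_apply, e1, e2]
  rw [heq]
  exact mul_mem (mul_mem hgG hmG) (inv_mem hgG)

lemma edge_of_descent {I : Set (Fin r)} {ε : Fin 2} {f : Fin r → Fin r}
    (hconn : ∀ x : Fin r, conn I ε (x : ℕ) ((f x : Fin r) : ℕ))
    {i : ℕ} (hi : i + 1 < r) (hd : f ⟨i + 1, hi⟩ < f ⟨i, by omega⟩) : edge I ε i := by
  have hdv : ((f ⟨i + 1, hi⟩ : Fin r) : ℕ) < ((f ⟨i, by omega⟩ : Fin r) : ℕ) := hd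
  by_cases hgt : i < ((f ⟨i, by omega⟩ : Fin r) : ℕ)
  · have H : ∀ k, min i ((f ⟨i, by omega⟩ : Fin r) : ℕ) ≤ k →
        k + 1 ≤ max i ((f ⟨i, by omega⟩ : Fin r) : ℕ) → edge I ε k := hconn ⟨i, by omega⟩
    exact H i (by omega) (by omega)
  · have H : ∀ k, min (i + 1) ((f ⟨i + 1, hi⟩ : Fin r) : ℕ) ≤ k →
        k + 1 ≤ max (i + 1) ((f ⟨i + 1, hi⟩ : Fin r) : ℕ) → edge I ε k := hconn ⟨i + 1, hi⟩
    exact H i (by omega) (by omega)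

def frow (σ : Equiv.Perm (Fin 2 × Fin r)) (ε : Fin 2) : Fin r → Fin r := fun x => (σ (ε, x)).2

lemma frow_inj {σ : Equiv.Perm (Fin 2 × Fin r)} (hrow : ∀ p : Fin 2 × Fin r, (σ p).1 = p.1)
    (ε : Fin 2) : Function.Injective (frow σ ε) := by
  intro x y h
  have h1 : σ (ε, x) = σ (ε, y) := Prod.ext (by rw [hrow (ε, x), hrow (ε, y)]) h
  exact congrArg Prod.snd (σ.injective h1)

lemma W_le_G_rowpres (hr : 3 ≤ r) (I : Set (Fin r)) :
    ∀ (n : ℕ) (σ : Equiv.Perm (Fin 2 × Fin r)), σ ∈ W I → (∀ p, (σ p).1 = p.1) →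
      2 * invc (frow σ 1) + invc (frow σ 0) ≤ n → σ ∈ G I := by
  intro n
  induction n using Nat.strong_induction_on with
  | _ n IH =>
  intro σ hσ hrow hn
  obtain ⟨-, hC2, hC3⟩ := mem_W_iff.mp hσ
  have key : ∀ (g : Equiv.Perm (Fin 2 × Fin r)) (t0 t1 : Fin r → Fin r),
      g ∈ G I → (∀ x : Fin r, g (0, x) = (0, t0 x)) → (∀ x : Fin r, g (1, x) = (1, t1 x)) →
      2 * invc (frow σ 1 ∘ t1) + invc (frow σ 0 ∘ t0) < n → σ ∈ G I := by
    intro g t0 t1 hgG h0 h1 hlt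
    have hgW : g ∈ W I := G_le_W hr I hgG
    have hgrow : ∀ p : Fin 2 × Fin r, (g p).1 = p.1 := by
      intro p
      obtain ⟨ε, x⟩ := p
      rcases fin2_cases ε with h | h <;> subst h
      · rw [h0 x]
      · rw [h1 x]
    have hσ' : σ * g ∈ W I := mul_mem hσ hgW
    have hrow' : ∀ p : Fin 2 × Fin r, ((σ * g) p).1 = p.1 := fun p => by
      simp only [Equiv.Perm.mul_apply]
      exact (hrow (g p)).trans (hgrow p)
    have hf0 : frow (σ * g) 0 = frow σ 0 ∘ t0 := funext fun x => by
      show (σ (g (0, x))).2 = (σ (0, t0 x)).2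
      rw [h0 x]
    have hf1 : frow (σ * g) 1 = frow σ 1 ∘ t1 := funext fun x => by
      show (σ (g (1, x))).2 = (σ (1, t1 x)).2
      rw [h1 x]
    have hmem : σ * g ∈ G I := IH (2 * invc (frow (σ * g) 1) + invc (frow (σ * g) 0))
      (by rw [hf0, hf1]; omega) (σ * g) hσ' hrow' le_rfl
    have hfin : σ = (σ * g) * g⁻¹ := (mul_inv_cancel_right σ g).symm
    rw [hfin]
    exact mul_mem hmem (inv_mem hgG)
  rcases exists_descent_or_id (frow_inj hrow 1) with ⟨i, hi, hd⟩ | hid1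
  · have hedge : edge I 1 i := edge_of_descent (fun x => hC2 (1, x)) hi hd
    rcases hedge with ⟨hlt2, hir, hiI⟩ | ⟨heq2, hPm, hor⟩
    · have hival : ((⟨i, hir⟩ : Fin r) : ℕ) + 3 ≤ r := by show i + 3 ≤ r; omega
      refine key (gen r ⟨i, hir⟩) (Equiv.swap ⟨i, by omega⟩ ⟨i + 1, hi⟩)
        (Equiv.swap ⟨i, by omega⟩ ⟨i + 1, hi⟩) (Subgroup.subset_closure ⟨_, hiI, rfl⟩)
        (fun x => gen_low_apply hival (0, x)) (fun x => gen_low_apply hival (1, x)) ?_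
      have l1 := invc_comp_swap_lt hi hd
      have l0 := invc_comp_swap_le (frow σ 0) hi
      omega
    · have hP1 : Pm I (r - 1) := by
        rcases hor with h0 | h1
        · exact absurd h0 (by decide)
        · exact h1
      have hPm2 : Pm I (r - 2) := (show i = r - 2 by omega) ▸ hPm
      refine key (Equiv.swap ((1 : Fin 2), ⟨i, by omega⟩) (1, ⟨i + 1, hi⟩)) id
        (Equiv.swap ⟨i, by omega⟩ ⟨i + 1, hi⟩) (s1_mem hr i (by omega) hPm2 hP1)
        (fun x => rowswap_apply_ne _ _ (by decide) _ _ _)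
        (fun x => rowswap_apply_eq _ _ _ _) ?_
      have l1 := invc_comp_swap_lt hi hd
      have e1 : invc (frow σ 0 ∘ id) = invc (frow σ 0) := by rw [Function.comp_id]
      omega
  · rcases exists_descent_or_id (frow_inj hrow 0) with ⟨i, hi, hd⟩ | hid0
    · have hedge : edge I 0 i := edge_of_descent (fun x => hC2 (0, x)) hi hd
      by_cases hc : i + 2 = r
      · obtain ⟨hir, hiI⟩ := Pm_of_edge hedge
        have hgen : gen r ⟨i, hir⟩ =
            Equiv.swap ((0 : Fin 2), ⟨i, by omega⟩) (0, ⟨i + 1, hi⟩) := by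
          rw [gen_mid_def hr (show ((⟨i, hir⟩ : Fin r) : ℕ) = r - 2 from by show i = r - 2; omega)]
          exact congrArg₂ Equiv.swap (Prod.ext rfl (Fin.ext (show r - 2 = i by omega)))
            (Prod.ext rfl (Fin.ext (show r - 1 = i + 1 by omega)))
        refine key (Equiv.swap ((0 : Fin 2), ⟨i, by omega⟩) (0, ⟨i + 1, hi⟩))
          (Equiv.swap ⟨i, by omega⟩ ⟨i + 1, hi⟩) id (Subgroup.subset_closure ⟨_, hiI, hgen⟩)
          (fun x => rowswap_apply_eq _ _ _ _)
          (fun x => rowswap_apply_ne _ _ (by decide) _ _ _) ?_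
        have l0 := invc_comp_swap_lt hi hd
        have e1 : invc (frow σ 1 ∘ id) = invc (frow σ 1) := by rw [Function.comp_id]
        omega
      · have hlow : i + 2 < r := by
          rcases hedge with h | h
          · exact h.1
          · omega
        have hDconn : conn I 0 i (r - 1) := by
          have hmoved : frow σ 0 ⟨i, by omega⟩ ≠ ⟨i, by omega⟩ ∨
              frow σ 0 ⟨i + 1, hi⟩ ≠ ⟨i + 1, hi⟩ := by
            by_contra hcon
            push_neg at hcon
            obtain ⟨e1, e2⟩ := hcon
            rw [e1, e2] at hd
            have hlt' : i + 1 < i := hd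
            omega
          have hfix : ∀ x : Fin r, ¬ Dm I (x : ℕ) → frow σ 0 x = x := by
            intro x hD
            have := hC3 x hD
            show (σ (0, x)).2 = x
            rw [this]
            exact hid1 x
          rcases hmoved with hm | hm
          · have hDi : Dm I ((⟨i, by omega⟩ : Fin r) : ℕ) := by
              by_contra hD
              exact hm (hfix _ hD)
            have hconn' : conn I 0 i (r - 1) := hDi.2
            exact hconn'
          · have hDi : Dm I ((⟨i + 1, hi⟩ : Fin r) : ℕ) := by
              by_contra hD
              exact hm (hfix _ hD)
            have hconn' : conn I 0 (i + 1) (r - 1) := hDi.2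
            intro k h1 h2
            by_cases hk : k = i
            · subst hk; exact hedge
            · exact hconn' k (by omega) (by omega)
        refine key (Equiv.swap ((0 : Fin 2), ⟨i, by omega⟩) (0, ⟨i + 1, hi⟩))
          (Equiv.swap ⟨i, by omega⟩ ⟨i + 1, hi⟩) id (s0_mem hr i (by omega) hDconn)
          (fun x => rowswap_apply_eq _ _ _ _)
          (fun x => rowswap_apply_ne _ _ (by decide) _ _ _) ?_
        have l0 := invc_comp_swap_lt hi hd
        have e1 : invc (frow σ 1 ∘ id) = invc (frow σ 1) := by rw [Function.comp_id]
        omega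
    · have hone : σ = 1 := by
        apply Equiv.ext
        intro p
        obtain ⟨ε, x⟩ := p
        have hsnd : (σ (ε, x)).2 = x := by
          rcases fin2_cases ε with h | h <;> subst h
          · exact hid0 x
          · exact hid1 x
        exact Prod.ext (hrow (ε, x)) hsnd
      rw [hone]
      exact one_mem _

lemma W_le_G (hr : 3 ≤ r) (I : Set (Fin r)) : W I ≤ G I := by
  intro σ hσ
  obtain ⟨hC1, hC2, hC3⟩ := mem_W_iff.mp hσ
  rcases hC1 with hrow | ⟨hflip, hP1⟩
  · exact W_le_G_rowpres hr I _ σ hσ hrow le_rfl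
  · obtain ⟨h1r, h1I⟩ := hP1
    have hgG : gen r ⟨r - 1, h1r⟩ ∈ G I := Subgroup.subset_closure ⟨_, h1I, rfl⟩
    have hgW : gen r ⟨r - 1, h1r⟩ ∈ W I := gen_mem_W hr h1I
    have hσ' : gen r ⟨r - 1, h1r⟩ * σ ∈ W I := mul_mem hgW hσ
    have hrow' : ∀ p : Fin 2 × Fin r, ((gen r ⟨r - 1, h1r⟩ * σ) p).1 = p.1 := by
      intro p
      have h1 : (gen r ⟨r - 1, h1r⟩ * σ) p = (Equiv.swap (0 : Fin 2) 1 (σ p).1, (σ p).2) := by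
        show gen r ⟨r - 1, h1r⟩ (σ p) = _
        exact gen_hi_apply hr rfl (σ p)
      rw [h1]
      exact fin2_swap01 _ _ (hflip p)
    have hmain : gen r ⟨r - 1, h1r⟩ * σ ∈ G I := W_le_G_rowpres hr I _ _ hσ' hrow' le_rfl
    have : σ = (gen r ⟨r - 1, h1r⟩)⁻¹ * (gen r ⟨r - 1, h1r⟩ * σ) := by group
    rw [this]
    exact mul_mem (inv_mem hgG) hmain

lemma G_eq_W (hr : 3 ≤ r) (I : Set (Fin r)) : G I = W I :=
  le_antisymm (G_le_W hr I) (W_le_G hr I)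

end Generation

section String

lemma swap_comm_apply {α : Type*} [DecidableEq α] {a b c d : α}
    (hac : a ≠ c) (had : a ≠ d) (hbc : b ≠ c) (hbd : b ≠ d) (x : α) :
    Equiv.swap a b (Equiv.swap c d x) = Equiv.swap c d (Equiv.swap a b x) := by
  by_cases hxc : x = c
  · subst hxc
    rw [Equiv.swap_apply_left, Equiv.swap_apply_of_ne_of_ne (Ne.symm had) (Ne.symm hbd),
      Equiv.swap_apply_of_ne_of_ne (Ne.symm hac) (Ne.symm hbc), Equiv.swap_apply_left]
  · by_cases hxd : x = d
    · subst hxd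
      rw [Equiv.swap_apply_right, Equiv.swap_apply_of_ne_of_ne (Ne.symm hac) (Ne.symm hbc),
        Equiv.swap_apply_of_ne_of_ne (Ne.symm had) (Ne.symm hbd), Equiv.swap_apply_right]
    · rw [Equiv.swap_apply_of_ne_of_ne hxc hxd]
      by_cases hxa : x = a
      · subst hxa
        rw [Equiv.swap_apply_left, Equiv.swap_apply_of_ne_of_ne hbc hbd]
      · by_cases hxb : x = b
        · subst hxb
          rw [Equiv.swap_apply_right, Equiv.swap_apply_of_ne_of_ne hac had]
        · rw [Equiv.swap_apply_of_ne_of_ne hxa hxb, Equiv.swap_apply_of_ne_of_ne hxc hxd]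

lemma gen_invol (hr : 3 ≤ r) (i : Fin r) : gen r i * gen r i = 1 := by
  by_cases h : (i : ℕ) + 3 ≤ r
  · apply Equiv.ext; intro p
    show gen r i (gen r i p) = p
    rw [gen_low_apply h, gen_low_apply h]
    exact Prod.ext rfl (Equiv.swap_apply_self _ _ _)
  · by_cases h2 : (i : ℕ) = r - 2
    · rw [gen_mid_def hr h2]; exact Equiv.swap_mul_self _ _
    · have h3 : (i : ℕ) = r - 1 := by have := i.isLt; omega
      apply Equiv.ext; intro p
      show gen r i (gen r i p) = p
      rw [gen_hi_apply hr h3, gen_hi_apply hr h3]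
      exact Prod.ext (Equiv.swap_apply_self _ _ _) rfl

lemma gen_comm (hr : 3 ≤ r) {i j : Fin r} (hij : (i : ℕ) + 2 ≤ (j : ℕ)) :
    gen r i * gen r j = gen r j * gen r i := by
  have hjr := j.isLt
  have hival : (i : ℕ) + 3 ≤ r := by omega
  by_cases hj : (j : ℕ) + 3 ≤ r
  · apply Equiv.ext; intro p
    show gen r i (gen r j p) = gen r j (gen r i p)
    rw [gen_low_apply hj p, gen_low_apply hival p, gen_low_apply hival, gen_low_apply hj]
    refine Prod.ext rfl ?_
    exact swap_comm_apply (Fin.ne_of_val_ne (show (i : ℕ) ≠ (j : ℕ) by omega))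
      (Fin.ne_of_val_ne (show (i : ℕ) ≠ (j : ℕ) + 1 by omega))
      (Fin.ne_of_val_ne (show (i : ℕ) + 1 ≠ (j : ℕ) by omega))
      (Fin.ne_of_val_ne (show (i : ℕ) + 1 ≠ (j : ℕ) + 1 by omega)) p.2
  · by_cases hj2 : (j : ℕ) = r - 2
    · apply Equiv.ext; intro p
      show gen r i (gen r j p) = gen r j (gen r i p)
      rw [gen_mid_def hr hj2, rowswap_apply, gen_low_apply hival, gen_low_apply hival,
        rowswap_apply]
      refine Prod.ext rfl ?_
      dsimp only
      by_cases hp1 : p.1 = 0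
      · rw [if_pos hp1, if_pos hp1]
        exact swap_comm_apply (Fin.ne_of_val_ne (show (i : ℕ) ≠ r - 2 by omega))
          (Fin.ne_of_val_ne (show (i : ℕ) ≠ r - 1 by omega))
          (Fin.ne_of_val_ne (show (i : ℕ) + 1 ≠ r - 2 by omega))
          (Fin.ne_of_val_ne (show (i : ℕ) + 1 ≠ r - 1 by omega)) p.2
      · rw [if_neg hp1, if_neg hp1]
    · have hj3 : (j : ℕ) = r - 1 := by omega
      rw [gen_hi_def hr hj3, gen_low_def hival]
      exact Equiv.ext fun p => rfl

lemma string_gen (hr : 3 ≤ r) (i j : Fin r) (h : (i : ℕ) + 2 ≤ (j : ℕ)) :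
    (gen r i * gen r j) ^ 2 = 1 := by
  have hc := gen_comm hr h
  have hii := gen_invol hr i
  have hjj := gen_invol hr j
  rw [sq]
  calc gen r i * gen r j * (gen r i * gen r j)
      = gen r i * (gen r j * gen r i) * gen r j := by simp only [mul_assoc]
    _ = gen r i * (gen r i * gen r j) * gen r j := by rw [← hc]
    _ = gen r i * gen r i * (gen r j * gen r j) := by simp only [mul_assoc]
    _ = 1 := by rw [hii, hjj, one_mul]

lemma sq_one_comm_swap {Gp : Type*} [Group Gp] {a b : Gp} (h : (a * b) ^ 2 = 1) :
    (b * a) ^ 2 = 1 := by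
  have e : (b * a) ^ 2 = a⁻¹ * (a * b) ^ 2 * a := by
    rw [sq, sq]
    simp only [mul_assoc, inv_mul_cancel_left]
  rw [e, h, mul_one, inv_mul_cancel]

end String

section Univ

lemma conn_univ (hr : 3 ≤ r) (ε : Fin 2) (x y : ℕ) (hx : x < r) (hy : y < r) :
    conn (Set.univ : Set (Fin r)) ε x y := by
  intro k h1 h2
  by_cases h : k + 2 < r
  · exact Or.inl ⟨h, by omega, Set.mem_univ _⟩
  · exact Or.inr ⟨by omega, ⟨by omega, Set.mem_univ _⟩, Or.inr ⟨by omega, Set.mem_univ _⟩⟩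

lemma Dm_univ (hr : 3 ≤ r) (x : Fin r) : Dm (Set.univ : Set (Fin r)) (x : ℕ) :=
  ⟨⟨by omega, Set.mem_univ _⟩, conn_univ hr 0 (x : ℕ) (r - 1) x.isLt (by omega)⟩

lemma fin2_swap01' : ∀ u v : Fin 2, u ≠ v → u = Equiv.swap (0 : Fin 2) 1 v := by decide

lemma mem_W_univ_iff (hr : 3 ≤ r) (σ : Equiv.Perm (Fin 2 × Fin r)) :
    σ ∈ W (Set.univ : Set (Fin r)) ↔
      ∃ π : Equiv.Perm (Fin 2), ∀ (ε : Fin 2) (x : Fin r), (σ (ε, x)).1 = π ε := by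
  constructor
  · intro hσ
    obtain ⟨h1, -, -⟩ := mem_W_iff.mp hσ
    rcases h1 with h | h
    · exact ⟨1, fun ε x => h (ε, x)⟩
    · exact ⟨Equiv.swap 0 1, fun ε x => fin2_swap01' _ _ (h.1 (ε, x))⟩
  · rintro ⟨π, hπ⟩
    refine mem_W_iff.mpr ⟨?_, fun p => conn_univ hr p.1 _ _ p.2.isLt (σ p).2.isLt,
      fun x hx => absurd (Dm_univ hr x) hx⟩
    rcases fin2_cases (π 0) with h0 | h0
    · have hne : π 1 ≠ 0 := by
        rw [← h0]
        exact fun h => (by decide : ¬ (1 : Fin 2) = 0) (π.injective h)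
      left
      intro p
      obtain ⟨ε, x⟩ := p
      rcases fin2_cases ε with h | h <;> subst h
      · rw [hπ 0 x, h0]
      · rw [hπ 1 x, fin2_ne0 hne]
    · right
      constructor
      · intro p
        obtain ⟨ε, x⟩ := p
        rcases fin2_cases ε with h | h <;> subst h
        · rw [hπ 0 x, h0]
          exact (by decide : ¬ (1 : Fin 2) = 0)
        · have h1 : π 1 = 0 := fin2_ne1
            (fun h => (by decide : ¬ (1 : Fin 2) = 0) (π.injective (h.trans h0.symm)))
          rw [hπ 1 x, h1]
          exact (by decide : ¬ (0 : Fin 2) = 1)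
      · exact ⟨by omega, Set.mem_univ _⟩

end Univ

end WreathAux

/-- Lemma "speccase": the CPR graph of the wreath product `S_r ≀ C₂` satisfies the string
and intersection properties, and generates the full stabilizer of the partition of
`Fin 2 × Fin r` into the two rows. -/
theorem wreath_Sr_C2_is_string_C_group
    (r : ℕ) (hr : 3 ≤ r) (ρ : Fin r → Equiv.Perm (Fin 2 × Fin r))
    (hlow : ∀ i : Fin r, ∀ hi : (i : ℕ) + 3 ≤ r,
      ρ i = Equiv.prodCongr (Equiv.refl (Fin 2))
        (Equiv.swap ⟨(i : ℕ), by omega⟩ ⟨(i : ℕ) + 1, by omega⟩))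
    (hr2 : ∀ i : Fin r, (i : ℕ) = r - 2 →
      ρ i = Equiv.swap (0, ⟨r - 2, by omega⟩) (0, ⟨r - 1, by omega⟩))
    (hr1 : ∀ i : Fin r, (i : ℕ) = r - 1 →
      ρ i = Equiv.prodCongr (Equiv.swap (0 : Fin 2) 1) (Equiv.refl (Fin r))) :
    (∀ i j : Fin r, (i : ℕ) + 2 ≤ (j : ℕ) ∨ (j : ℕ) + 2 ≤ (i : ℕ) →
      (ρ i * ρ j) ^ 2 = 1) ∧
    (∀ I J : Set (Fin r),
      Subgroup.closure (ρ '' I) ⊓ Subgroup.closure (ρ '' J) =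
        Subgroup.closure (ρ '' (I ∩ J))) ∧
    (∀ σ : Equiv.Perm (Fin 2 × Fin r), σ ∈ Subgroup.closure (Set.range ρ) ↔
      ∃ π : Equiv.Perm (Fin 2), ∀ (ε : Fin 2) (x : Fin r), (σ (ε, x)).1 = π ε) := by
  have hρ : ρ = WreathAux.gen r := by
    funext i
    by_cases h : (i : ℕ) + 3 ≤ r
    · rw [hlow i h, WreathAux.gen_low_def h]
    · by_cases h2 : (i : ℕ) = r - 2
      · rw [hr2 i h2, WreathAux.gen_mid_def hr h2]
      · rw [hr1 i (by have := i.isLt; omega), WreathAux.gen_hi_def hr (by have := i.isLt; omega)]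
  subst hρ
  refine ⟨?_, ?_, ?_⟩
  · intro i j hij
    rcases hij with h | h
    · exact WreathAux.string_gen hr i j h
    · exact WreathAux.sq_one_comm_swap (WreathAux.string_gen hr j i h)
  · intro I J
    have e : ∀ K : Set (Fin r),
        Subgroup.closure ((WreathAux.gen r) '' K) = WreathAux.W K := fun K =>
      WreathAux.G_eq_W hr K
    have m1 : Subgroup.closure ((WreathAux.gen r) '' (I ∩ J)) ≤
        Subgroup.closure ((WreathAux.gen r) '' I) :=
      Subgroup.closure_mono (Set.image_mono Set.inter_subset_left)
    have m2 : Subgroup.closure ((WreathAux.gen r) '' (I ∩ J)) ≤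
        Subgroup.closure ((WreathAux.gen r) '' J) :=
      Subgroup.closure_mono (Set.image_mono Set.inter_subset_right)
    apply le_antisymm
    · rw [e I, e J, e (I ∩ J)]
      intro σ hσ
      rw [Subgroup.mem_inf] at hσ
      exact WreathAux.W_inter hσ.1 hσ.2
    · exact le_inf m1 m2
  · intro σ
    have e : Subgroup.closure (Set.range (WreathAux.gen r)) = WreathAux.W Set.univ := by
      rw [← Set.image_univ]
      exact WreathAux.G_eq_W hr Set.univ
    rw [e]
    exact WreathAux.mem_W_univ_iff hr σ
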